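/- arXiv:1208.3087 — 2 statements merged into one kernel-verified Lean document; each statement's English description precedes it below -/
import Mathlib

section
/- Let μ be a Borel probability measure on ℝ with ∫ y dμ = 0 and finite fourth moment; write E_p = ∫ y^p dμ for p = 2, 3, 4. Let γ ∈ (0,1), δ = 1 − γ. Then for all natural numbers 0 < l₁ < l₂ < l₃, q ≥ 2, and every x ∈ ℝ, the iterated kernel integral ∫∫∫∫ y₀·y₁·y₂·y₃ K_{l₃−l₂}(y₂, dy₃) K_{l₂−l₁}(y₁, dy₂) K_{l₁}(y₀, dy₁) K_q(x, dy₀) equals δ^{l₃}(δ^q x⁴ + (1−δ^q)E₄) + δ^{l₃−l₁}(1−δ^{l₁}) E₃ δ^q x + δ^{l₃−l₂+l₁}(1−δ^{l₂−l₁}) E₂ (δ^q x² + (1−δ^q)E₂). That is, E(m̄_i m̄_{i+l₁} m̄_{i+l₂} m̄_{i+l₃} | m̄_{i−q} = x) has this closed form. -/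
open MeasureTheory

/-- The `h`-step renewal kernel of one MSMD multiplier with renewal distribution `μ` and
switching probability `γ`: `K_h(x, ·) = (1 - (1-γ)^h)·μ + (1-γ)^h·δ_x`. -/
noncomputable def renewalKernel (μ : Measure ℝ) (γ : ℝ) (h : ℕ) (x : ℝ) : Measure ℝ :=
  ENNReal.ofReal (1 - (1 - γ) ^ h) • μ + ENNReal.ofReal ((1 - γ) ^ h) • Measure.dirac x

lemma integrable_dirac_of_meas {f : ℝ → ℝ} (hm : Measurable f) (x : ℝ) :
    Integrable f (Measure.dirac x) := by
  refine ⟨hm.aestronglyMeasurable, ?_⟩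
  rw [HasFiniteIntegral, lintegral_dirac' _ hm.enorm]
  exact ENNReal.coe_lt_top

lemma renewal_integral (μ : Measure ℝ) [IsProbabilityMeasure μ] {γ : ℝ}
    (hγ : γ ∈ Set.Ioo (0 : ℝ) 1) (h : ℕ) (x : ℝ) {f : ℝ → ℝ}
    (hf : Integrable f μ) (hm : Measurable f) :
    ∫ y, f y ∂(renewalKernel μ γ h x)
      = (1 - (1 - γ) ^ h) * ∫ y, f y ∂μ + (1 - γ) ^ h * f x := by
  have h0 : (0 : ℝ) ≤ (1 - γ) ^ h := pow_nonneg (by linarith [hγ.2]) h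
  have h1 : (1 - γ) ^ h ≤ 1 := pow_le_one₀ (by linarith [hγ.2]) (by linarith [hγ.1])
  rw [renewalKernel, integral_add_measure (hf.smul_measure ENNReal.ofReal_ne_top)
      (((integrable_dirac_of_meas hm x)).smul_measure ENNReal.ofReal_ne_top),
    integral_smul_measure, integral_smul_measure,
    integral_dirac' _ _ hm.stronglyMeasurable,
    ENNReal.toReal_ofReal (by linarith), ENNReal.toReal_ofReal h0]
  simp [smul_eq_mul]

lemma integrable_pow_of_four {μ : Measure ℝ} [IsProbabilityMeasure μ]
    (hmom : Integrable (fun y : ℝ => y ^ 4) μ) (p : ℕ) (hp : p ≤ 4) :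
    Integrable (fun y : ℝ => y ^ p) μ := by
  refine Integrable.mono' ((integrable_const (1 : ℝ)).add hmom)
    (measurable_id.pow_const p).aestronglyMeasurable
    (Filter.Eventually.of_forall fun y => ?_)
  simp only [Pi.add_apply, Real.norm_eq_abs]
  have h4 : |y| ^ 4 = y ^ 4 := by rw [pow_abs, abs_of_nonneg (by positivity)]
  have h4' : (0:ℝ) ≤ y ^ 4 := by positivity
  rcases le_or_gt (|y|) 1 with hy | hy
  · have : |y ^ p| ≤ 1 := by rw [abs_pow]; exact pow_le_one₀ (abs_nonneg y) hy
    linarith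
  · have : |y ^ p| ≤ |y| ^ 4 := by rw [abs_pow]; exact pow_le_pow_right₀ hy.le hp
    linarith

/-- the conditional fourth cross-moment of the centered multiplier chain:
for `0 < l₁ < l₂ < l₃`, `q ≥ 2` and every `x`,
`E(m̄_i m̄_{i+l₁} m̄_{i+l₂} m̄_{i+l₃} | m̄_{i−q} = x)
  = δ^{l₃}(δ^q x⁴ + (1−δ^q)E₄) + δ^{l₃−l₁}(1−δ^{l₁})E₃ δ^q x
    + δ^{l₃−l₂+l₁}(1−δ^{l₂−l₁})E₂(δ^q x² + (1−δ^q)E₂)`,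
where `E_p = ∫ y^p dμ` and `δ = 1 − γ`. -/
theorem centered_chain_fourth_cross_moment_conditional
    (μ : Measure ℝ) [IsProbabilityMeasure μ]
    (hmean : ∫ y, y ∂μ = 0) (hmom : Integrable (fun y : ℝ => y ^ 4) μ)
    (E₂ E₃ E₄ : ℝ) (hE₂ : E₂ = ∫ y, y ^ 2 ∂μ) (hE₃ : E₃ = ∫ y, y ^ 3 ∂μ)
    (hE₄ : E₄ = ∫ y, y ^ 4 ∂μ)
    (γ : ℝ) (hγ : γ ∈ Set.Ioo (0 : ℝ) 1) (δ : ℝ) (hδ : δ = 1 - γ)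
    (l₁ l₂ l₃ q : ℕ) (hl₁ : 0 < l₁) (hl₁₂ : l₁ < l₂) (hl₂₃ : l₂ < l₃) (hq : 2 ≤ q)
    (x : ℝ) :
    ∫ y₀, (∫ y₁, (∫ y₂, (∫ y₃, y₀ * y₁ * y₂ * y₃
        ∂(renewalKernel μ γ (l₃ - l₂) y₂))
      ∂(renewalKernel μ γ (l₂ - l₁) y₁))
      ∂(renewalKernel μ γ l₁ y₀))
      ∂(renewalKernel μ γ q x) =
      δ ^ l₃ * (δ ^ q * x ^ 4 + (1 - δ ^ q) * E₄) +
        δ ^ (l₃ - l₁) * (1 - δ ^ l₁) * E₃ * (δ ^ q * x) +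
        δ ^ (l₃ - l₂ + l₁) * (1 - δ ^ (l₂ - l₁)) * E₂ *
          (δ ^ q * x ^ 2 + (1 - δ ^ q) * E₂) := by
  subst hδ
  have i1 : Integrable (fun y : ℝ => y) μ := by
    simpa using integrable_pow_of_four hmom 1 (by norm_num)
  have i2 : Integrable (fun y : ℝ => y ^ 2) μ := integrable_pow_of_four hmom 2 (by norm_num)
  have i3 : Integrable (fun y : ℝ => y ^ 3) μ := integrable_pow_of_four hmom 3 (by norm_num)
  have h3 : ∀ y₀ y₁ y₂ : ℝ, ∫ y₃, y₀ * y₁ * y₂ * y₃ ∂(renewalKernel μ γ (l₃ - l₂) y₂)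
      = y₀ * y₁ * ((1 - γ) ^ (l₃ - l₂) * y₂ ^ 2) := by
    intro y₀ y₁ y₂
    rw [MeasureTheory.integral_const_mul,
      renewal_integral μ hγ _ _ i1 measurable_id, hmean]
    ring
  have h2 : ∀ y₀ y₁ : ℝ, ∫ y₂, y₀ * y₁ * ((1 - γ) ^ (l₃ - l₂) * y₂ ^ 2)
        ∂(renewalKernel μ γ (l₂ - l₁) y₁)
      = (y₀ * (1 - γ) ^ (l₃ - l₂) * (1 - (1 - γ) ^ (l₂ - l₁)) * E₂) * y₁
        + (y₀ * (1 - γ) ^ (l₃ - l₂) * (1 - γ) ^ (l₂ - l₁)) * y₁ ^ 3 := by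
    intro y₀ y₁
    rw [MeasureTheory.integral_const_mul, MeasureTheory.integral_const_mul,
      renewal_integral μ hγ _ _ i2 (measurable_id.pow_const 2), ← hE₂]
    ring
  have h1 : ∀ y₀ : ℝ, ∫ y₁,
        ((y₀ * (1 - γ) ^ (l₃ - l₂) * (1 - (1 - γ) ^ (l₂ - l₁)) * E₂) * y₁
          + (y₀ * (1 - γ) ^ (l₃ - l₂) * (1 - γ) ^ (l₂ - l₁)) * y₁ ^ 3)
        ∂(renewalKernel μ γ l₁ y₀)
      = ((1 - γ) ^ (l₃ - l₂) * (1 - γ) ^ (l₂ - l₁) * (1 - (1 - γ) ^ l₁) * E₃) * y₀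
        + ((1 - γ) ^ (l₃ - l₂) * (1 - (1 - γ) ^ (l₂ - l₁)) * E₂ * (1 - γ) ^ l₁) * y₀ ^ 2
        + ((1 - γ) ^ (l₃ - l₂) * (1 - γ) ^ (l₂ - l₁) * (1 - γ) ^ l₁) * y₀ ^ 4 := by
    intro y₀
    set A := y₀ * (1 - γ) ^ (l₃ - l₂) * (1 - (1 - γ) ^ (l₂ - l₁)) * E₂ with hA
    set B := y₀ * (1 - γ) ^ (l₃ - l₂) * (1 - γ) ^ (l₂ - l₁) with hB
    have hf : Integrable (fun y : ℝ => A * y + B * y ^ 3) μ :=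
      (i1.const_mul A).add (i3.const_mul B)
    have hfm : Measurable (fun y : ℝ => A * y + B * y ^ 3) := by fun_prop
    rw [renewal_integral μ hγ _ _ hf hfm,
      integral_add (μ := μ) (by exact i1.const_mul A) (by exact i3.const_mul B),
      MeasureTheory.integral_const_mul, MeasureTheory.integral_const_mul, hmean, ← hE₃,
      hA, hB]
    ring
  simp only [h3, h2, h1]
  set C₁ := (1 - γ) ^ (l₃ - l₂) * (1 - γ) ^ (l₂ - l₁) * (1 - (1 - γ) ^ l₁) * E₃ with hC₁
  set C₂ := (1 - γ) ^ (l₃ - l₂) * (1 - (1 - γ) ^ (l₂ - l₁)) * E₂ * (1 - γ) ^ l₁ with hC₂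
  set C₄ := (1 - γ) ^ (l₃ - l₂) * (1 - γ) ^ (l₂ - l₁) * (1 - γ) ^ l₁ with hC₄
  have hg : Integrable (fun y : ℝ => C₁ * y + C₂ * y ^ 2 + C₄ * y ^ 4) μ :=
    ((i1.const_mul C₁).add (i2.const_mul C₂)).add (hmom.const_mul C₄)
  have hgm : Measurable (fun y : ℝ => C₁ * y + C₂ * y ^ 2 + C₄ * y ^ 4) := by fun_prop
  rw [renewal_integral μ hγ q x hg hgm,
    integral_add (μ := μ) (by exact (i1.const_mul C₁).add (i2.const_mul C₂))
      (by exact hmom.const_mul C₄),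
    integral_add (μ := μ) (by exact i1.const_mul C₁) (by exact i2.const_mul C₂),
    MeasureTheory.integral_const_mul, MeasureTheory.integral_const_mul,
    MeasureTheory.integral_const_mul, hmean, ← hE₂, ← hE₄,
    show (1 - γ) ^ l₃ = (1 - γ) ^ (l₃ - l₂) * (1 - γ) ^ (l₂ - l₁) * (1 - γ) ^ l₁ by
      rw [← pow_add, ← pow_add]; congr 1; omega,
    show (1 - γ) ^ (l₃ - l₁) = (1 - γ) ^ (l₃ - l₂) * (1 - γ) ^ (l₂ - l₁) by
      rw [← pow_add]; congr 1; omega,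
    show (1 - γ) ^ (l₃ - l₂ + l₁) = (1 - γ) ^ (l₃ - l₂) * (1 - γ) ^ l₁ by
      rw [← pow_add],
    hC₁, hC₂, hC₄]
  ring
end

section
/- Let μ be a Borel probability measure on ℝ with ∫ y dμ = 0 and finite fourth moment; write E_p = ∫ y^p dμ for p = 2, 4. Let γ ∈ (0,1), δ = 1 − γ. Then for all natural numbers 0 < l₁ < l₂ < l₃, the stationary fourth cross-moment ∫∫∫∫ y₀·y₁·y₂·y₃ K_{l₃−l₂}(y₂, dy₃) K_{l₂−l₁}(y₁, dy₂) K_{l₁}(y₀, dy₁) dμ(y₀) equals δ^{l₃} E₄ + δ^{l₃−l₂+l₁}(1 − δ^{l₂−l₁}) E₂². That is, E(m̄_i m̄_{i+l₁} m̄_{i+l₂} m̄_{i+l₃}) = δ^{l₃} E(m̄⁴) + δ^{l₃−l₂+l₁}(1−δ^{l₂−l₁}) E(m̄²)². -/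
open MeasureTheory

lemma my_integrable_dirac {f : ℝ → ℝ} (hf : Measurable f) (x : ℝ) :
    Integrable f (Measure.dirac x) := by
  refine ⟨hf.aestronglyMeasurable, ?_⟩
  simp only [HasFiniteIntegral]
  rw [lintegral_dirac' x (by exact hf.enorm)]
  exact ENNReal.coe_lt_top

lemma my_pow_integrable (μ : Measure ℝ) [IsProbabilityMeasure μ]
    (hmom : Integrable (fun y : ℝ => y ^ 4) μ) (p : ℕ) (hp : p ≤ 4) :
    Integrable (fun y : ℝ => y ^ p) μ := by
  refine ((integrable_const (1 : ℝ)).add hmom).mono'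
    ((measurable_id.pow_const p).aestronglyMeasurable) ?_
  filter_upwards with y
  simp only [Real.norm_eq_abs, abs_pow, Pi.add_apply]
  have h4 : |y| ^ 4 = y ^ 4 := by rw [← abs_pow, abs_of_nonneg (by positivity)]
  rcases le_or_gt (|y|) 1 with h | h
  · have : |y| ^ p ≤ 1 := pow_le_one₀ (abs_nonneg y) h
    nlinarith [pow_nonneg (abs_nonneg y) 4, h4]
  · have : |y| ^ p ≤ |y| ^ 4 := pow_le_pow_right₀ h.le hp
    nlinarith [h4]

lemma my_integral_renewalKernel {μ : Measure ℝ} [IsProbabilityMeasure μ] {γ : ℝ}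
    (h0 : 0 ≤ 1 - γ) (h1 : 1 - γ ≤ 1) (h : ℕ) (x : ℝ) {f : ℝ → ℝ}
    (hfm : Measurable f) (hf : Integrable f μ) :
    ∫ y, f y ∂(renewalKernel μ γ h x)
      = (1 - (1 - γ) ^ h) * ∫ y, f y ∂μ + (1 - γ) ^ h * f x := by
  have hp0 : (0 : ℝ) ≤ (1 - γ) ^ h := pow_nonneg h0 h
  have hp1 : (1 - γ) ^ h ≤ 1 := pow_le_one₀ h0 h1
  rw [renewalKernel, integral_add_measure (hf.smul_measure ENNReal.ofReal_lt_top.ne)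
      ((my_integrable_dirac hfm x).smul_measure ENNReal.ofReal_lt_top.ne),
    integral_smul_measure, integral_smul_measure, integral_dirac,
    ENNReal.toReal_ofReal (by linarith), ENNReal.toReal_ofReal hp0]
  simp only [smul_eq_mul]


/-- the stationary fourth cross-moment of the centered multiplier chain:
for `0 < l₁ < l₂ < l₃`,
`E(m̄_i m̄_{i+l₁} m̄_{i+l₂} m̄_{i+l₃}) = δ^{l₃} E₄ + δ^{l₃−l₂+l₁}(1−δ^{l₂−l₁}) E₂²`,
where `E_p = ∫ y^p dμ` and `δ = 1 − γ`. -/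
theorem centered_chain_fourth_cross_moment_stationary
    (μ : Measure ℝ) [IsProbabilityMeasure μ]
    (hmean : ∫ y, y ∂μ = 0) (hmom : Integrable (fun y : ℝ => y ^ 4) μ)
    (E₂ E₄ : ℝ) (hE₂ : E₂ = ∫ y, y ^ 2 ∂μ) (hE₄ : E₄ = ∫ y, y ^ 4 ∂μ)
    (γ : ℝ) (hγ : γ ∈ Set.Ioo (0 : ℝ) 1) (δ : ℝ) (hδ : δ = 1 - γ)
    (l₁ l₂ l₃ : ℕ) (hl₁ : 0 < l₁) (hl₁₂ : l₁ < l₂) (hl₂₃ : l₂ < l₃) :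
    ∫ y₀, (∫ y₁, (∫ y₂, (∫ y₃, y₀ * y₁ * y₂ * y₃
        ∂(renewalKernel μ γ (l₃ - l₂) y₂))
      ∂(renewalKernel μ γ (l₂ - l₁) y₁))
      ∂(renewalKernel μ γ l₁ y₀))
      ∂μ =
      δ ^ l₃ * E₄ + δ ^ (l₃ - l₂ + l₁) * (1 - δ ^ (l₂ - l₁)) * E₂ ^ 2 := by
  obtain ⟨hγ0, hγ1⟩ := hγ
  have h0 : (0:ℝ) ≤ 1 - γ := by linarith
  have h1 : (1:ℝ) - γ ≤ 1 := by linarith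
  have i1 : Integrable (fun y : ℝ => y) μ := by
    simpa using my_pow_integrable μ hmom 1 (by norm_num)
  have i2 : Integrable (fun y : ℝ => y ^ 2) μ := my_pow_integrable μ hmom 2 (by norm_num)
  have i3 : Integrable (fun y : ℝ => y ^ 3) μ := my_pow_integrable μ hmom 3 (by norm_num)
  set a := (1 - γ) ^ (l₃ - l₂) with ha
  set b := (1 - γ) ^ (l₂ - l₁) with hb
  set c := (1 - γ) ^ l₁ with hc
  set E₃ := ∫ y, y ^ 3 ∂μ with hE₃
  have key1 : ∀ y₀ y₁ y₂ : ℝ,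
      (∫ y₃, y₀ * y₁ * y₂ * y₃ ∂(renewalKernel μ γ (l₃ - l₂) y₂))
        = a * (y₀ * y₁) * y₂ ^ 2 := by
    intro y₀ y₁ y₂
    rw [my_integral_renewalKernel (f := fun y₃ : ℝ => y₀ * y₁ * y₂ * y₃) h0 h1 (l₃ - l₂) y₂
      (by fun_prop) (i1.const_mul (y₀ * y₁ * y₂)),
      integral_const_mul, hmean]
    ring
  have key2 : ∀ y₀ y₁ : ℝ,
      (∫ y₂, a * (y₀ * y₁) * y₂ ^ 2 ∂(renewalKernel μ γ (l₂ - l₁) y₁))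
        = (a * (1 - b) * E₂ * y₀) * y₁ + (a * b * y₀) * y₁ ^ 3 := by
    intro y₀ y₁
    rw [my_integral_renewalKernel (f := fun y₂ : ℝ => a * (y₀ * y₁) * y₂ ^ 2) h0 h1 (l₂ - l₁) y₁
      (by fun_prop) (i2.const_mul _),
      integral_const_mul, ← hE₂]
    ring
  have key3 : ∀ y₀ : ℝ,
      (∫ y₁, (a * (1 - b) * E₂ * y₀) * y₁ + (a * b * y₀) * y₁ ^ 3
          ∂(renewalKernel μ γ l₁ y₀))
        = ((1 - c) * (a * b) * E₃) * y₀ + (c * a * (1 - b) * E₂) * y₀ ^ 2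
            + (c * a * b) * y₀ ^ 4 := by
    intro y₀
    rw [my_integral_renewalKernel
      (f := fun y₁ : ℝ => (a * (1 - b) * E₂ * y₀) * y₁ + (a * b * y₀) * y₁ ^ 3) h0 h1 l₁ y₀
      (by fun_prop) ((i1.const_mul _).add (i3.const_mul _)),
      integral_add (i1.const_mul _) (i3.const_mul _),
      integral_const_mul, integral_const_mul,
      hmean, ← hE₃]
    ring
  simp only [key1, key2, key3]
  have ia : Integrable (fun y₀ : ℝ => ((1 - c) * (a * b) * E₃) * y₀) μ := i1.const_mul _
  have ib : Integrable (fun y₀ : ℝ => (c * a * (1 - b) * E₂) * y₀ ^ 2) μ := i2.const_mul _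
  have ic : Integrable (fun y₀ : ℝ => (c * a * b) * y₀ ^ 4) μ := hmom.const_mul _
  have iab : Integrable (fun y₀ : ℝ => ((1 - c) * (a * b) * E₃) * y₀ + (c * a * (1 - b) * E₂) * y₀ ^ 2) μ := ia.add ib
  rw [integral_add iab ic, integral_add ia ib,
    integral_const_mul, integral_const_mul,
    integral_const_mul, hmean, ← hE₂, ← hE₄]
  have hpow : c * a * b = δ ^ l₃ := by
    rw [hδ, ha, hb, hc, ← pow_add, ← pow_add]; congr 1; omega
  have hpow2 : c * a = δ ^ (l₃ - l₂ + l₁) := by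
    rw [hδ, ha, hc, ← pow_add]; congr 1; omega
  have hb' : b = δ ^ (l₂ - l₁) := by rw [hδ, hb]
  linear_combination E₄ * hpow + (1 - δ ^ (l₂ - l₁)) * E₂ ^ 2 * hpow2 - (c*a) * E₂^2 * hb'
end
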